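/- Let Ψ ∈ ⋀^N h be normalized, and let Φ ∈ h∧h be a normalized eigenvector of γ₂^Ψ with eigenvalue Λ and canonical form Φ = Σ_{k=1}^∞ λ_k u_k ∧ v_k; let B = Σ_{k=1}^∞ λ_k c_{k,↓} c_{k,↑}. Then for every k ∈ ℕ: 2·⟨Ψ, c*_{k,↑}c*_{k,↓}·B·Ψ⟩ = Λ·λ_k. -/

import Mathlib

/- Setting: `H` is the one-particle Hilbert space `h`, `F` is the fermionic Fock space over
`h` (carrying annihilation operators `an f = c(f)` satisfying the CAR, with adjoints the
creation operators `c*(f)`, and vacuum `Ω`), and `T` is the two-particle space `h ⊗ h`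
(realized by a bilinear map `tp`, with the antisymmetric tensors `h ∧ h` inside it). -/

open scoped ComplexOrder

notation "⟪" x ", " y "⟫_ℂ" => @inner ℂ _ _ x y
open ContinuousLinearMap

noncomputable section

/-- A family of annihilation operators `an f = c(f)` on a Fock space `F` satisfying the
canonical anticommutation relations `{c(f), c(g)} = 0` and `{c(f), c*(g)} = ⟪f, g⟫ • 1`. -/
def SatisfiesCAR {H F : Type*} [NormedAddCommGroup H] [InnerProductSpace ℂ H]
    [NormedAddCommGroup F] [InnerProductSpace ℂ F] [CompleteSpace F]
    (an : H → F →L[ℂ] F) : Prop :=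
  (∀ f g : H, an f ∘L an g + an g ∘L an f = 0) ∧
  (∀ f g : H, an f ∘L adjoint (an g) + adjoint (an g) ∘L an f = ⟪f, g⟫_ℂ • (1 : F →L[ℂ] F))

/-- The action of `B = ∑ₖ λₖ c_{k,↓} c_{k,↑}` (where `c_{k,↑} = an (u k)` and
`c_{k,↓} = an (v k)`) on a vector of the Fock space. -/
def applyB {H F : Type*} [NormedAddCommGroup F] [InnerProductSpace ℂ F]
    (an : H → F →L[ℂ] F) (u v : ℕ → H) (lam : ℕ → ℝ) (ψ : F) : F :=
  ∑' k : ℕ, (lam k : ℂ) • an (v k) (an (u k) ψ)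

/-- The action of `B* = ∑ₖ λₖ c*_{k,↑} c*_{k,↓}` on a vector of the Fock space. -/
def applyBd {H F : Type*} [NormedAddCommGroup F] [InnerProductSpace ℂ F] [CompleteSpace F]
    (an : H → F →L[ℂ] F) (u v : ℕ → H) (lam : ℕ → ℝ) (ψ : F) : F :=
  ∑' k : ℕ, (lam k : ℂ) • adjoint (an (u k)) (adjoint (an (v k)) ψ)

/-- `ψ` belongs to the `N`-particle sector `⋀^N h` of the Fock space, i.e. `ψ` is an
eigenvector of the number operator `𝒩 = ∑ₖ (c*_{k,↑} c_{k,↑} + c*_{k,↓} c_{k,↓})` with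
eigenvalue `N` (here the `u k` and `v k` jointly form an orthonormal basis of `h`). -/
def InSector {H F : Type*} [NormedAddCommGroup F] [InnerProductSpace ℂ F] [CompleteSpace F]
    (an : H → F →L[ℂ] F) (u v : ℕ → H) (N : ℕ) (ψ : F) : Prop :=
  ∑' k : ℕ, (adjoint (an (u k)) (an (u k) ψ) + adjoint (an (v k)) (an (v k) ψ)) = (N : ℂ) • ψ

/-- `Ω` is the (normalized) vacuum vector: it is annihilated by every `an f`. -/
def IsVacuum {H F : Type*} [NormedAddCommGroup F] [InnerProductSpace ℂ F]
    (an : H → F →L[ℂ] F) (Ω : F) : Prop :=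
  ‖Ω‖ = 1 ∧ ∀ f : H, an f Ω = 0

/-- The trial states `Ψ_M = (B*)^M Ω`. -/
def PsiM {H F : Type*} [NormedAddCommGroup F] [InnerProductSpace ℂ F] [CompleteSpace F]
    (an : H → F →L[ℂ] F) (u v : ℕ → H) (lam : ℕ → ℝ) (Ω : F) : ℕ → F
  | 0 => Ω
  | M + 1 => applyBd an u v lam (PsiM an u v lam Ω M)

/-- `tp` realizes the Hilbert space `T` as the Hilbert tensor product `h ⊗ h`: inner
products of elementary tensors multiply, and elementary tensors span a dense subspace. -/
def IsHilbertTensorProduct {H T : Type*} [NormedAddCommGroup H] [InnerProductSpace ℂ H]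
    [NormedAddCommGroup T] [InnerProductSpace ℂ T]
    (tp : H →ₗ[ℂ] H →ₗ[ℂ] T) : Prop :=
  (∀ x y z w : H, ⟪tp x y, tp z w⟫_ℂ = ⟪x, z⟫_ℂ * ⟪y, w⟫_ℂ) ∧
  (Submodule.span ℂ {t : T | ∃ x y : H, t = tp x y}).topologicalClosure = ⊤

/-- The elementary antisymmetric tensor `x ∧ y = (x ⊗ y - y ⊗ x)/√2`. -/
def wedgeVec {H T : Type*} [NormedAddCommGroup H] [InnerProductSpace ℂ H]
    [NormedAddCommGroup T] [InnerProductSpace ℂ T]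
    (tp : H →ₗ[ℂ] H →ₗ[ℂ] T) (x y : H) : T :=
  (((Real.sqrt 2 : ℝ) : ℂ))⁻¹ • (tp x y - tp y x)

/-- `Φ = ∑ₖ λₖ • (u k) ∧ (v k)` is a canonical form of `Φ ∈ h ∧ h`: the sequences
`(u k)` and `(v k)` are jointly orthonormal and jointly span `h`, `λₖ ≥ 0` and
`∑ₖ λₖ² = 1`. -/
def CanonicalWedgeForm {H T : Type*} [NormedAddCommGroup H] [InnerProductSpace ℂ H]
    [NormedAddCommGroup T] [InnerProductSpace ℂ T]
    (tp : H →ₗ[ℂ] H →ₗ[ℂ] T) (u v : ℕ → H) (lam : ℕ → ℝ) (Φ : T) : Prop :=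
  Orthonormal ℂ (Sum.elim u v) ∧
  (Submodule.span ℂ (Set.range u ∪ Set.range v)).topologicalClosure = ⊤ ∧
  (∀ k, 0 ≤ lam k) ∧ (∑' k : ℕ, lam k ^ 2) = 1 ∧
  Φ = ∑' k : ℕ, (lam k : ℂ) • wedgeVec tp (u k) (v k)

/-- `G` is the two-body operator `γ₂^Ψ` associated with the state `Ψ`, characterized by
`⟪φ₁ ⊗ φ₂, G (ψ₁ ⊗ ψ₂)⟫ = ⟪Ψ, c*(ψ₁) c*(ψ₂) c(φ₂) c(φ₁) Ψ⟫`. -/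
def IsTwoBodyOp {H F T : Type*} [NormedAddCommGroup H] [InnerProductSpace ℂ H]
    [NormedAddCommGroup F] [InnerProductSpace ℂ F] [CompleteSpace F]
    [NormedAddCommGroup T] [InnerProductSpace ℂ T]
    (tp : H →ₗ[ℂ] H →ₗ[ℂ] T) (an : H → F →L[ℂ] F) (Ψ : F) (G : T →L[ℂ] T) : Prop :=
  ∀ p q r s : H,
    ⟪tp p q, G (tp r s)⟫_ℂ = ⟪Ψ, adjoint (an r) (adjoint (an s) (an q (an p Ψ)))⟫_ℂ


/-- Bilinear expansion of inner products of finite sums with real coefficients. -/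
lemma inner_sum_smul_sum_smul {T : Type*} [NormedAddCommGroup T] [InnerProductSpace ℂ T]
    (a b : ℕ → T) (c : ℕ → ℝ) (t : Finset ℕ) :
    ⟪∑ j ∈ t, (c j : ℂ) • a j, ∑ l ∈ t, (c l : ℂ) • b l⟫_ℂ
      = ∑ j ∈ t, ∑ l ∈ t, (c j : ℂ) * (c l : ℂ) * ⟪a j, b l⟫_ℂ := by
  rw [sum_inner]
  refine Finset.sum_congr rfl fun j hj => ?_
  rw [inner_sum]
  refine Finset.sum_congr rfl fun l hl => ?_
  rw [inner_smul_left, inner_smul_right, Complex.conj_ofReal]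
  ring

/-- **Equation (39)/(40).** If `Φ = ∑ₖ λₖ uₖ ∧ vₖ` is an eigenvector of `γ₂^Ψ` with
eigenvalue `Λ`, then `2⟪Ψ, c*_{k,↑} c*_{k,↓} B Ψ⟫ = Λ·λₖ` for every `k`. -/
theorem eigenvector_matrix_element
    {H F T : Type*} [NormedAddCommGroup H] [InnerProductSpace ℂ H] [CompleteSpace H]
    [NormedAddCommGroup F] [InnerProductSpace ℂ F] [CompleteSpace F]
    [NormedAddCommGroup T] [InnerProductSpace ℂ T] [CompleteSpace T]
    (an : H → F →L[ℂ] F) (hCAR : SatisfiesCAR an)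
    (tp : H →ₗ[ℂ] H →ₗ[ℂ] T) (htp : IsHilbertTensorProduct tp)
    (u v : ℕ → H) (lam : ℕ → ℝ) (Φ : T) (hΦnorm : ‖Φ‖ = 1)
    (hΦ : CanonicalWedgeForm tp u v lam Φ)
    (N : ℕ)
    (Ψ : F) (hΨnorm : ‖Ψ‖ = 1) (hΨsec : InSector an u v N Ψ)
    (G : T →L[ℂ] T) (hG : IsTwoBodyOp tp an Ψ G)
    (Λ : ℝ) (hEig : G Φ = (Λ : ℂ) • Φ) :
    ∀ k : ℕ,
      2 * ⟪Ψ, adjoint (an (u k)) (adjoint (an (v k)) (applyB an u v lam Ψ))⟫_ℂ =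
        ((Λ * lam k : ℝ) : ℂ) := by
  classical
  obtain ⟨hCAR1, hCAR2⟩ := hCAR
  obtain ⟨htp1, -⟩ := htp
  obtain ⟨hon, -, hlam0, hlam2, hΦeq⟩ := hΦ
  intro k
  have hon' := orthonormal_iff_ite.mp hon
  have huu : ∀ i j : ℕ, ⟪u i, u j⟫_ℂ = if i = j then 1 else 0 := by
    intro i j; simpa using hon' (Sum.inl i) (Sum.inl j)
  have hvv : ∀ i j : ℕ, ⟪v i, v j⟫_ℂ = if i = j then 1 else 0 := by
    intro i j; simpa using hon' (Sum.inr i) (Sum.inr j)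
  have huv : ∀ i j : ℕ, ⟪u i, v j⟫_ℂ = 0 := by
    intro i j; simpa using hon' (Sum.inl i) (Sum.inr j)
  have hvu : ∀ i j : ℕ, ⟪v i, u j⟫_ℂ = 0 := by
    intro i j; simpa using hon' (Sum.inr i) (Sum.inl j)
  -- abbreviation for the pair-annihilated vectors
  set x : ℕ → F := fun j => an (v j) (an (u j) Ψ) with hxdef
  -- antisymmetry of annihilation operators
  have hanti : ∀ f g : H, ∀ ψ : F, an f (an g ψ) = - an g (an f ψ) := by
    intro f g ψ
    have h := congrArg (fun A : F →L[ℂ] F => A ψ) (hCAR1 f g)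
    simp only [ContinuousLinearMap.add_apply, ContinuousLinearMap.comp_apply,
      ContinuousLinearMap.zero_apply] at h
    exact eq_neg_of_add_eq_zero_left h
  -- antisymmetry of creation operators
  have hantid : ∀ f g : H, ∀ ψ : F,
      adjoint (an f) (adjoint (an g) ψ) = - adjoint (an g) (adjoint (an f) ψ) := by
    intro f g ψ
    have h := congrArg (fun A : F →L[ℂ] F => adjoint A) (hCAR1 g f)
    simp only [map_add, ContinuousLinearMap.adjoint_comp, map_zero] at h
    have h' := congrArg (fun A : F →L[ℂ] F => A ψ) h
    simp only [ContinuousLinearMap.add_apply, ContinuousLinearMap.comp_apply,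
      ContinuousLinearMap.zero_apply] at h'
    exact eq_neg_of_add_eq_zero_left h'
  -- matrix elements of G on the elementary tensors
  have hGx : ∀ j l : ℕ, ⟪tp (u j) (v j), G (tp (u l) (v l))⟫_ℂ = ⟪x l, x j⟫_ℂ := by
    intro j l
    rw [hG (u j) (v j) (u l) (v l), adjoint_inner_right, adjoint_inner_right]
  -- summability of the squares of the coefficients
  have hlamsum : Summable (fun j : ℕ => lam j ^ 2) := by
    by_contra h
    rw [tsum_eq_zero_of_not_summable h] at hlam2
    norm_num at hlam2
  -- the key norm bound from boundedness of G
  have hbound : ∀ t : Finset ℕ,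
      ‖∑ j ∈ t, (lam j : ℂ) • x j‖ ^ 2 ≤ ‖G‖ * ∑ j ∈ t, lam j ^ 2 := by
    intro t
    set ξ : T := ∑ j ∈ t, (lam j : ℂ) • tp (u j) (v j) with hξ
    have hξsq : ‖ξ‖ ^ 2 = ∑ j ∈ t, lam j ^ 2 := by
      have h1 : ⟪ξ, ξ⟫_ℂ = ((∑ j ∈ t, lam j ^ 2 : ℝ) : ℂ) := by
        rw [hξ, inner_sum_smul_sum_smul]
        push_cast
        refine Finset.sum_congr rfl fun j hj => ?_
        rw [Finset.sum_eq_single j]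
        · rw [htp1, huu, hvv]; simp; ring
        · intro l hl hlj
          rw [htp1, huu, hvv]
          simp [Ne.symm hlj]
        · intro hj'; exact absurd hj hj'
      rw [norm_sq_eq_re_inner (𝕜 := ℂ), h1, RCLike.re_to_complex, Complex.ofReal_re]
    have h2 : ⟪∑ j ∈ t, (lam j : ℂ) • x j, ∑ j ∈ t, (lam j : ℂ) • x j⟫_ℂ = ⟪ξ, G ξ⟫_ℂ := by
      have hGξ : G ξ = ∑ l ∈ t, (lam l : ℂ) • G (tp (u l) (v l)) := by
        rw [hξ, map_sum]
        exact Finset.sum_congr rfl fun l hl => by rw [map_smul]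
      rw [hGξ, hξ, inner_sum_smul_sum_smul, inner_sum_smul_sum_smul]
      simp only [hGx]
      rw [Finset.sum_comm]
      refine Finset.sum_congr rfl fun j hj => Finset.sum_congr rfl fun l hl => ?_
      ring
    have h3 : ‖∑ j ∈ t, (lam j : ℂ) • x j‖ ^ 2 ≤ ‖⟪ξ, G ξ⟫_ℂ‖ := by
      rw [norm_sq_eq_re_inner (𝕜 := ℂ), h2]
      exact RCLike.re_le_norm _
    have h4 : ‖⟪ξ, G ξ⟫_ℂ‖ ≤ ‖ξ‖ * (‖G‖ * ‖ξ‖) :=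
      le_trans (norm_inner_le_norm _ _) (by
        have := G.le_opNorm ξ
        nlinarith [norm_nonneg ξ])
    calc ‖∑ j ∈ t, (lam j : ℂ) • x j‖ ^ 2 ≤ ‖⟪ξ, G ξ⟫_ℂ‖ := h3
      _ ≤ ‖ξ‖ * (‖G‖ * ‖ξ‖) := h4
      _ = ‖G‖ * ‖ξ‖ ^ 2 := by ring
      _ = ‖G‖ * ∑ j ∈ t, lam j ^ 2 := by rw [hξsq]
  -- summability of the family defining B Ψ
  have hxsum : Summable (fun j : ℕ => (lam j : ℂ) • x j) := by
    rw [summable_iff_vanishing_norm]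
    intro ε hε
    obtain ⟨s, hs⟩ := summable_iff_vanishing_norm.mp hlamsum (ε ^ 2 / (‖G‖ + 1))
      (by positivity)
    refine ⟨s, fun t ht => ?_⟩
    have h1 := hbound t
    have h2 := hs t ht
    have h3 : ∑ j ∈ t, lam j ^ 2 < ε ^ 2 / (‖G‖ + 1) := by
      rwa [Real.norm_eq_abs,
        abs_of_nonneg (Finset.sum_nonneg fun j _ => sq_nonneg _)] at h2
    have hGnn : (0 : ℝ) ≤ ‖G‖ := norm_nonneg _
    have hsumnn : (0 : ℝ) ≤ ∑ j ∈ t, lam j ^ 2 :=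
      Finset.sum_nonneg fun j _ => sq_nonneg _
    have h5 : ‖∑ j ∈ t, (lam j : ℂ) • x j‖ ^ 2 < ε ^ 2 := by
      have hd : (0:ℝ) < ‖G‖ + 1 := by linarith
      have : ‖G‖ * ∑ j ∈ t, lam j ^ 2 < ε ^ 2 := by
        calc ‖G‖ * ∑ j ∈ t, lam j ^ 2 ≤ ‖G‖ * (ε ^ 2 / (‖G‖ + 1)) := by
              exact mul_le_mul_of_nonneg_left (le_of_lt h3) hGnn
          _ < ε ^ 2 := by
              rw [mul_div_assoc']
              rw [div_lt_iff₀ hd]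
              nlinarith
      linarith
    exact lt_of_pow_lt_pow_left₀ 2 (le_of_lt hε) h5
  -- wedge vectors are orthonormal
  have hsqrt2 : ((Real.sqrt 2 : ℝ) : ℂ) * ((Real.sqrt 2 : ℝ) : ℂ) = 2 := by
    rw [← Complex.ofReal_mul, Real.mul_self_sqrt (by norm_num)]
    norm_num
  have hc2 : (((Real.sqrt 2 : ℝ) : ℂ))⁻¹ * (((Real.sqrt 2 : ℝ) : ℂ))⁻¹ = 1 / 2 := by
    rw [← mul_inv, hsqrt2]
    norm_num
  have hww : ∀ i j : ℕ, ⟪wedgeVec tp (u i) (v i), wedgeVec tp (u j) (v j)⟫_ℂ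
      = if i = j then 1 else 0 := by
    intro i j
    unfold wedgeVec
    simp only [inner_smul_left, inner_smul_right, inner_sub_left, inner_sub_right,
      htp1, huu, hvv, huv, hvu, map_inv₀, Complex.conj_ofReal]
    by_cases h : i = j
    · subst h
      simp
      linear_combination (2 : ℂ) * hc2
    · simp only [if_neg h]
      ring
  -- summability of the wedge expansion of Φ
  have hwsum : Summable (fun j : ℕ => (lam j : ℂ) • wedgeVec tp (u j) (v j)) := by
    by_contra h
    rw [tsum_eq_zero_of_not_summable h] at hΦeq
    rw [hΦeq, norm_zero] at hΦnorm
    norm_num at hΦnorm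
  -- ⟪w k, Φ⟫ = λ k
  have hwk : ⟪wedgeVec tp (u k) (v k), Φ⟫_ℂ = (lam k : ℂ) := by
    rw [hΦeq]
    have hmt := ContinuousLinearMap.map_tsum (innerSL ℂ (wedgeVec tp (u k) (v k))) hwsum
    simp only [innerSL_apply_apply] at hmt
    rw [hmt]
    rw [tsum_eq_single k]
    · rw [inner_smul_right, hww, if_pos rfl, mul_one]
    · intro j hj
      rw [inner_smul_right, hww, if_neg (fun h => hj h.symm), mul_zero]
  -- eigenvalue relation expanded
  have hεG : ((Λ * lam k : ℝ) : ℂ)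
      = ∑' j : ℕ, ((lam j : ℂ) * ⟪wedgeVec tp (u k) (v k), G (wedgeVec tp (u j) (v j))⟫_ℂ) := by
    have h1 : ⟪wedgeVec tp (u k) (v k), G Φ⟫_ℂ = ((Λ * lam k : ℝ) : ℂ) := by
      rw [hEig, inner_smul_right, hwk]
      push_cast
      ring
    have h2 : ⟪wedgeVec tp (u k) (v k), G Φ⟫_ℂ
        = ∑' j : ℕ, ((lam j : ℂ) * ⟪wedgeVec tp (u k) (v k), G (wedgeVec tp (u j) (v j))⟫_ℂ) := by
      rw [hΦeq]
      have hmt := ContinuousLinearMap.map_tsum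
        ((innerSL ℂ (wedgeVec tp (u k) (v k))).comp G) hwsum
      simp only [ContinuousLinearMap.comp_apply, innerSL_apply_apply, map_smul,
        inner_smul_right] at hmt
      exact hmt
    rw [← h1, h2]
  -- the four-term expansion of ⟪w k, G (w j)⟫
  have hGw : ∀ j : ℕ, ⟪wedgeVec tp (u k) (v k), G (wedgeVec tp (u j) (v j))⟫_ℂ
      = 2 * ⟪x j, x k⟫_ℂ := by
    intro j
    have hT1 : ⟪Ψ, adjoint (an (u j)) (adjoint (an (v j)) (an (v k) (an (u k) Ψ)))⟫_ℂ
        = ⟪x j, x k⟫_ℂ := by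
      rw [adjoint_inner_right, adjoint_inner_right]
    have hT2 : ⟪Ψ, adjoint (an (v j)) (adjoint (an (u j)) (an (v k) (an (u k) Ψ)))⟫_ℂ
        = - ⟪x j, x k⟫_ℂ := by
      rw [hantid, inner_neg_right, hT1]
    have hT3 : ⟪Ψ, adjoint (an (u j)) (adjoint (an (v j)) (an (u k) (an (v k) Ψ)))⟫_ℂ
        = - ⟪x j, x k⟫_ℂ := by
      rw [hanti (u k) (v k) Ψ, map_neg, map_neg, inner_neg_right, hT1]
    have hT4 : ⟪Ψ, adjoint (an (v j)) (adjoint (an (u j)) (an (u k) (an (v k) Ψ)))⟫_ℂ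
        = ⟪x j, x k⟫_ℂ := by
      rw [hanti (u k) (v k) Ψ, map_neg, map_neg, inner_neg_right, hT2, neg_neg]
    unfold wedgeVec
    simp only [map_smul, map_sub, inner_smul_left, inner_smul_right, inner_sub_left,
      inner_sub_right, map_inv₀, Complex.conj_ofReal]
    rw [hG (u k) (v k) (u j) (v j), hG (u k) (v k) (v j) (u j),
      hG (v k) (u k) (u j) (v j), hG (v k) (u k) (v j) (u j)]
    rw [hT1, hT2, hT3, hT4]
    linear_combination (4 * ⟪x j, x k⟫_ℂ) * hc2
  -- the left-hand side expanded
  have hLHS : ⟪Ψ, adjoint (an (u k)) (adjoint (an (v k)) (applyB an u v lam Ψ))⟫_ℂ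
      = ∑' j : ℕ, ((lam j : ℂ) * ⟪x k, x j⟫_ℂ) := by
    rw [adjoint_inner_right, adjoint_inner_right]
    show ⟪x k, applyB an u v lam Ψ⟫_ℂ = _
    unfold applyB
    have hmt := ContinuousLinearMap.map_tsum (innerSL ℂ (x k)) hxsum
    simp only [innerSL_apply_apply, inner_smul_right] at hmt
    exact hmt
  -- conclude
  have hstar : ((Λ * lam k : ℝ) : ℂ)
      = star (2 * ⟪Ψ, adjoint (an (u k)) (adjoint (an (v k)) (applyB an u v lam Ψ))⟫_ℂ) := by
    rw [hLHS, ← tsum_mul_left, tsum_star, hεG]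
    congr 1
    funext j
    rw [hGw j]
    simp only [star_mul', Complex.star_def, Complex.conj_ofReal, inner_conj_symm, map_ofNat]
    ring
  calc 2 * ⟪Ψ, adjoint (an (u k)) (adjoint (an (v k)) (applyB an u v lam Ψ))⟫_ℂ
      = star (star (2 * ⟪Ψ, adjoint (an (u k))
          (adjoint (an (v k)) (applyB an u v lam Ψ))⟫_ℂ)) := (star_star _).symm
    _ = star ((Λ * lam k : ℝ) : ℂ) := by rw [← hstar]
    _ = ((Λ * lam k : ℝ) : ℂ) := Complex.conj_ofReal _
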